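/- With O(M_n) as above and I the Poisson ideal generated by x_{1j} and x_{i1} (2 ≤ i,j ≤ n), the quotient Poisson algebra O(M_n)/I is isomorphic as a Poisson algebra to O(M_{n−1})[t], where the bracket on O(M_{n−1})[t] extends that of O(M_{n−1}) trivially (t is Poisson-central); the isomorphism sends x_{ij}+I ↦ x_{i−1,j−1} for 2 ≤ i,j ≤ n and x_{11}+I ↦ t. -/

import Mathlib

/- The semiclassical limit Poisson bracket on O(M_n) = ℂ[x_{ij}], realized on
`MvPolynomial (Fin n × Fin n) ℂ`.  The Leibniz-rule extension of a bracket
given on generators by the antisymmetric bivector `Pn n p q = {x_p, x_q}` is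
the bidifferential operator `pbn n f g = ∑ p q, Pn n p q * ∂f/∂x_p * ∂g/∂x_q`. -/

open MvPolynomial

noncomputable section

/-- The bivector of the semiclassical limit bracket:
`{x_{ij}, x_{kl}} = 2 x_{il} x_{kj}` if `i<k` and `j<l`;
`= x_{ij} x_{kl}` if (`i=k` and `j<l`) or (`j=l` and `i<k`); `= 0` otherwise;
extended antisymmetrically. -/
def Pn (n : ℕ) (p q : Fin n × Fin n) : MvPolynomial (Fin n × Fin n) ℂ :=
  if p.1 < q.1 ∧ p.2 < q.2 then 2 * X (p.1, q.2) * X (q.1, p.2)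
  else if q.1 < p.1 ∧ q.2 < p.2 then -(2 * X (q.1, p.2) * X (p.1, q.2))
  else if (p.1 = q.1 ∧ p.2 < q.2) ∨ (p.2 = q.2 ∧ p.1 < q.1) then X p * X q
  else if (p.1 = q.1 ∧ q.2 < p.2) ∨ (p.2 = q.2 ∧ q.1 < p.1) then -(X p * X q)
  else 0

/-- The semiclassical limit Poisson bracket on `O(M_n)` (the Leibniz-rule
extension of the bracket on generators). -/
def pbn (n : ℕ) (f g : MvPolynomial (Fin n × Fin n) ℂ) :
    MvPolynomial (Fin n × Fin n) ℂ :=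
  ∑ p : Fin n × Fin n, ∑ q : Fin n × Fin n, Pn n p q * pderiv p f * pderiv q g

/-- The Poisson ideal `I = (x_{1j}, x_{i1} : 2 ≤ i,j)` of `O(M_{n+1})`
(first row/column indexed by `0`). -/
def In (n : ℕ) : Ideal (MvPolynomial (Fin (n + 1) × Fin (n + 1)) ℂ) :=
  Ideal.span {q : MvPolynomial (Fin (n + 1) × Fin (n + 1)) ℂ |
    ∃ j : Fin (n + 1), j ≠ 0 ∧ (q = X (0, j) ∨ q = X (j, 0))}

/-- The Poisson bracket of `O(M_n)[t]` extending that of `O(M_n)` trivially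
(`t` is Poisson-central): applied coefficientwise. -/
def pbP (n : ℕ) (F G : Polynomial (MvPolynomial (Fin n × Fin n) ℂ)) :
    Polynomial (MvPolynomial (Fin n × Fin n) ℂ) :=
  ∑ i ∈ F.support, ∑ j ∈ G.support,
    Polynomial.C (pbn n (F.coeff i) (G.coeff j)) * Polynomial.X ^ (i + j)

/-! ### Basic properties of `pbn` -/

lemma pbn_C_left (n : ℕ) (a : ℂ) (g : MvPolynomial (Fin n × Fin n) ℂ) :
    pbn n (C a) g = 0 := by
  simp [pbn]

lemma pbn_C_right (n : ℕ) (a : ℂ) (f : MvPolynomial (Fin n × Fin n) ℂ) :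
    pbn n f (C a) = 0 := by
  simp [pbn]

lemma pbn_zero_left (n : ℕ) (g : MvPolynomial (Fin n × Fin n) ℂ) : pbn n 0 g = 0 := by
  simpa using pbn_C_left n 0 g

lemma pbn_zero_right (n : ℕ) (f : MvPolynomial (Fin n × Fin n) ℂ) : pbn n f 0 = 0 := by
  simpa using pbn_C_right n 0 f

lemma pbn_one_left (n : ℕ) (g : MvPolynomial (Fin n × Fin n) ℂ) : pbn n 1 g = 0 := by
  simpa using pbn_C_left n 1 g

lemma pbn_one_right (n : ℕ) (f : MvPolynomial (Fin n × Fin n) ℂ) : pbn n f 1 = 0 := by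
  simpa using pbn_C_right n 1 f

lemma pbn_add_left (n : ℕ) (f f' g : MvPolynomial (Fin n × Fin n) ℂ) :
    pbn n (f + f') g = pbn n f g + pbn n f' g := by
  simp [pbn, mul_add, add_mul, Finset.sum_add_distrib]

lemma pbn_add_right (n : ℕ) (f g g' : MvPolynomial (Fin n × Fin n) ℂ) :
    pbn n f (g + g') = pbn n f g + pbn n f g' := by
  simp [pbn, mul_add, add_mul, Finset.sum_add_distrib]

lemma pbn_mul_left (n : ℕ) (f f' g : MvPolynomial (Fin n × Fin n) ℂ) :
    pbn n (f * f') g = f * pbn n f' g + f' * pbn n f g := by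
  simp only [pbn, Finset.mul_sum, ← Finset.sum_add_distrib]
  refine Finset.sum_congr rfl fun p _ => Finset.sum_congr rfl fun q _ => ?_
  rw [pderiv_mul]; ring

lemma pbn_mul_right (n : ℕ) (f g g' : MvPolynomial (Fin n × Fin n) ℂ) :
    pbn n f (g * g') = g * pbn n f g' + g' * pbn n f g := by
  simp only [pbn, Finset.mul_sum, ← Finset.sum_add_distrib]
  refine Finset.sum_congr rfl fun p _ => Finset.sum_congr rfl fun q _ => ?_
  rw [pderiv_mul]; ring

lemma pbn_X_X (n : ℕ) (p q : Fin n × Fin n) : pbn n (X p) (X q) = Pn n p q := by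
  rw [pbn]
  rw [Finset.sum_eq_single p]
  · rw [Finset.sum_eq_single q]
    · simp
    · intro b _ hb; simp [pderiv_X, Pi.single_apply, hb.symm]
    · simp
  · intro b _ hb
    simp [pderiv_X, Pi.single_apply, hb.symm]
  · simp

/-! ### Basic properties of `pbP` -/

lemma pbP_eq_sum (n : ℕ) (F G : Polynomial (MvPolynomial (Fin n × Fin n) ℂ)) :
    pbP n F G = F.sum fun i a => G.sum fun j b =>
      Polynomial.C (pbn n a b) * Polynomial.X ^ (i + j) := rfl

lemma pbP_monomial (n : ℕ) (i j : ℕ) (a b : MvPolynomial (Fin n × Fin n) ℂ) :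
    pbP n (Polynomial.monomial i a) (Polynomial.monomial j b) =
      Polynomial.monomial (i + j) (pbn n a b) := by
  rw [pbP_eq_sum, Polynomial.sum_monomial_index, Polynomial.sum_monomial_index]
  · rw [Polynomial.C_mul_X_pow_eq_monomial]
  · simp [pbn_zero_right]
  · simp [Polynomial.sum, pbn_zero_left]

lemma pbP_add_left (n : ℕ) (F F' G : Polynomial (MvPolynomial (Fin n × Fin n) ℂ)) :
    pbP n (F + F') G = pbP n F G + pbP n F' G := by
  rw [pbP_eq_sum, pbP_eq_sum, pbP_eq_sum, Polynomial.sum_add_index]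
  · intro i; simp [Polynomial.sum, pbn_zero_left]
  · intro i a b; rw [← Polynomial.sum_add]
    congr 1; ext j c; rw [pbn_add_left, map_add, add_mul]

lemma pbP_add_right (n : ℕ) (F G G' : Polynomial (MvPolynomial (Fin n × Fin n) ℂ)) :
    pbP n F (G + G') = pbP n F G + pbP n F G' := by
  rw [pbP_eq_sum, pbP_eq_sum, pbP_eq_sum, ← Polynomial.sum_add]
  congr 1; ext i a
  rw [Polynomial.sum_add_index]
  · intro j; simp [pbn_zero_right]
  · intro j b c; rw [pbn_add_right, map_add, add_mul]

lemma pbP_mul_left (n : ℕ) (F F' G : Polynomial (MvPolynomial (Fin n × Fin n) ℂ)) :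
    pbP n (F * F') G = F * pbP n F' G + F' * pbP n F G := by
  induction F using Polynomial.induction_on' with
  | add p q hp hq =>
    rw [add_mul, pbP_add_left, hp, hq, pbP_add_left]; ring
  | monomial i a =>
    induction F' using Polynomial.induction_on' with
    | add p q hp hq =>
      rw [mul_add, pbP_add_left, hp, hq, pbP_add_left]; ring
    | monomial j b =>
      induction G using Polynomial.induction_on' with
      | add p q hp hq =>
        rw [pbP_add_right, hp, hq, pbP_add_right, pbP_add_right]; ring
      | monomial k c =>
        rw [Polynomial.monomial_mul_monomial, pbP_monomial, pbP_monomial, pbP_monomial,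
          pbn_mul_left, map_add, Polynomial.monomial_mul_monomial,
          Polynomial.monomial_mul_monomial]
        congr 2 <;> ring

lemma pbP_mul_right (n : ℕ) (F G G' : Polynomial (MvPolynomial (Fin n × Fin n) ℂ)) :
    pbP n F (G * G') = G * pbP n F G' + G' * pbP n F G := by
  induction G using Polynomial.induction_on' with
  | add p q hp hq =>
    rw [add_mul, pbP_add_right, hp, hq, pbP_add_right]; ring
  | monomial i a =>
    induction G' using Polynomial.induction_on' with
    | add p q hp hq =>
      rw [mul_add, pbP_add_right, hp, hq, pbP_add_right]; ring
    | monomial j b =>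
      induction F using Polynomial.induction_on' with
      | add p q hp hq =>
        rw [pbP_add_left, hp, hq, pbP_add_left, pbP_add_left]; ring
      | monomial k c =>
        rw [Polynomial.monomial_mul_monomial, pbP_monomial, pbP_monomial, pbP_monomial,
          pbn_mul_right, map_add, Polynomial.monomial_mul_monomial,
          Polynomial.monomial_mul_monomial]
        congr 2 <;> ring

lemma pbP_C_left (n : ℕ) (a : ℂ) (G : Polynomial (MvPolynomial (Fin n × Fin n) ℂ)) :
    pbP n (Polynomial.C (C a)) G = 0 := by
  rw [← Polynomial.monomial_zero_left, pbP_eq_sum, Polynomial.sum_monomial_index]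
  · simp [Polynomial.sum, pbn_C_left]
  · simp [Polynomial.sum, pbn_zero_left]

lemma pbP_C_right (n : ℕ) (a : ℂ) (F : Polynomial (MvPolynomial (Fin n × Fin n) ℂ)) :
    pbP n F (Polynomial.C (C a)) = 0 := by
  rw [pbP]
  apply Finset.sum_eq_zero
  intro i _
  apply Finset.sum_eq_zero
  intro j hj
  rw [Polynomial.mem_support_iff, Polynomial.coeff_C] at hj
  rcases eq_or_ne j 0 with h | h
  · subst h; simp [pbn_C_right]
  · simp [h] at hj

lemma pbP_zero_left (n : ℕ) (G : Polynomial (MvPolynomial (Fin n × Fin n) ℂ)) :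
    pbP n 0 G = 0 := by simp [pbP]

lemma pbP_zero_right (n : ℕ) (F : Polynomial (MvPolynomial (Fin n × Fin n) ℂ)) :
    pbP n F 0 = 0 := by simp [pbP]

lemma pbP_X_X (n : ℕ) : pbP n Polynomial.X Polynomial.X = 0 := by
  rw [← Polynomial.monomial_one_one_eq_X, pbP_monomial, pbn_one_left, map_zero]

lemma pbP_X_C (n : ℕ) (x : MvPolynomial (Fin n × Fin n) ℂ) :
    pbP n Polynomial.X (Polynomial.C x) = 0 := by
  rw [← Polynomial.monomial_one_one_eq_X, ← Polynomial.monomial_zero_left,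
    pbP_monomial, pbn_one_left, map_zero]

lemma pbP_C_X (n : ℕ) (x : MvPolynomial (Fin n × Fin n) ℂ) :
    pbP n (Polynomial.C x) Polynomial.X = 0 := by
  rw [← Polynomial.monomial_one_one_eq_X, ← Polynomial.monomial_zero_left,
    pbP_monomial, pbn_one_right, map_zero]

lemma pbP_C_C (n : ℕ) (x y : MvPolynomial (Fin n × Fin n) ℂ) :
    pbP n (Polynomial.C x) (Polynomial.C y) = Polynomial.C (pbn n x y) := by
  rw [← Polynomial.monomial_zero_left (a := x), ← Polynomial.monomial_zero_left (a := y),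
    pbP_monomial, Polynomial.monomial_zero_left]

/-! ### The isomorphism -/

/-- Images of the generators under the map `O(M_{n+1}) → O(M_n)[t]`. -/
def gmap (n : ℕ) (p : Fin (n + 1) × Fin (n + 1)) :
    Polynomial (MvPolynomial (Fin n × Fin n) ℂ) :=
  Fin.cases (Fin.cases Polynomial.X (fun _ => 0) p.2)
    (fun i => Fin.cases 0 (fun j => Polynomial.C (X (i, j))) p.2) p.1

@[simp] lemma gmap_00 (n : ℕ) : gmap n (0, 0) = Polynomial.X := rfl
@[simp] lemma gmap_zero (n : ℕ) : gmap n 0 = Polynomial.X := rfl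
@[simp] lemma gmap_0succ (n : ℕ) (j : Fin n) : gmap n (0, j.succ) = 0 := by simp [gmap]
@[simp] lemma gmap_succ0 (n : ℕ) (i : Fin n) : gmap n (i.succ, 0) = 0 := by simp [gmap]
@[simp] lemma gmap_succsucc (n : ℕ) (i j : Fin n) :
    gmap n (i.succ, j.succ) = Polynomial.C (X (i, j)) := by simp [gmap]

/-- The algebra map `O(M_{n+1}) → O(M_n)[t]`. -/
def phin (n : ℕ) : MvPolynomial (Fin (n + 1) × Fin (n + 1)) ℂ →ₐ[ℂ]
    Polynomial (MvPolynomial (Fin n × Fin n) ℂ) := aeval (gmap n)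

@[simp] lemma phin_X (n : ℕ) (p : Fin (n + 1) × Fin (n + 1)) :
    phin n (X p) = gmap n p := aeval_X _ _

lemma phin_vanish (n : ℕ) : ∀ a ∈ In n, phin n a = 0 := by
  intro a ha
  have : In n ≤ RingHom.ker (phin n).toRingHom := by
    rw [In, Ideal.span_le]
    rintro q ⟨j, hj, hq | hq⟩ <;> subst hq <;>
      rcases Fin.eq_zero_or_eq_succ j with rfl | ⟨k, rfl⟩ <;>
      simp_all [RingHom.mem_ker, phin]
  exact this ha

/-- The induced map `O(M_{n+1})/I → O(M_n)[t]`. -/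
def phibar (n : ℕ) : (MvPolynomial (Fin (n + 1) × Fin (n + 1)) ℂ ⧸ In n) →ₐ[ℂ]
    Polynomial (MvPolynomial (Fin n × Fin n) ℂ) :=
  Ideal.Quotient.liftₐ (In n) (phin n) (phin_vanish n)

/-- The inverse map `O(M_n)[t] → O(M_{n+1})/I`. -/
def psin (n : ℕ) : Polynomial (MvPolynomial (Fin n × Fin n) ℂ) →ₐ[ℂ]
    (MvPolynomial (Fin (n + 1) × Fin (n + 1)) ℂ ⧸ In n) :=
  Polynomial.aevalTower
    (aeval fun q : Fin n × Fin n => Ideal.Quotient.mk (In n) (X (q.1.succ, q.2.succ)))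
    (Ideal.Quotient.mk (In n) (X (0, 0)))

lemma phibar_mk (n : ℕ) (f : MvPolynomial (Fin (n + 1) × Fin (n + 1)) ℂ) :
    phibar n (Ideal.Quotient.mk (In n) f) = phin n f := rfl

lemma comp1 (n : ℕ) : (phibar n).comp (psin n) = AlgHom.id ℂ _ := by
  apply Polynomial.algHom_ext'
  · apply AlgHom.ext; intro r
    induction r using MvPolynomial.induction_on with
    | C a => simp [psin, phibar, phin]
    | add f g hf hg => simp_all [map_add]
    | mul_X f q hf => simp_all [map_mul, psin, phibar_mk]
  · simp [psin, phibar_mk, Polynomial.aevalTower_X]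

lemma comp2 (n : ℕ) : (psin n).comp (phibar n) = AlgHom.id ℂ _ := by
  apply Ideal.Quotient.algHom_ext
  apply MvPolynomial.algHom_ext
  intro p
  obtain ⟨p1, p2⟩ := p
  rcases Fin.eq_zero_or_eq_succ p1 with rfl | ⟨i, rfl⟩ <;>
    rcases Fin.eq_zero_or_eq_succ p2 with rfl | ⟨j, rfl⟩
  · simp [phibar_mk, psin, Polynomial.aevalTower_X]
  · have : (X ((0 : Fin (n+1)), j.succ) : MvPolynomial _ ℂ) ∈ In n :=
      Ideal.subset_span ⟨j.succ, Fin.succ_ne_zero j, Or.inl rfl⟩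
    simp [phibar, phin, psin, Ideal.Quotient.eq_zero_iff_mem.mpr this]
  · have : (X ((i.succ : Fin (n+1)), 0) : MvPolynomial _ ℂ) ∈ In n :=
      Ideal.subset_span ⟨i.succ, Fin.succ_ne_zero i, Or.inr rfl⟩
    simp [phibar, phin, psin, Ideal.Quotient.eq_zero_iff_mem.mpr this]
  · simp [phibar_mk, psin]

/-- The algebra isomorphism `O(M_{n+1})/I ≅ O(M_n)[t]`. -/
def eIso (n : ℕ) : (MvPolynomial (Fin (n + 1) × Fin (n + 1)) ℂ ⧸ In n) ≃ₐ[ℂ]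
    Polynomial (MvPolynomial (Fin n × Fin n) ℂ) :=
  AlgEquiv.ofAlgHom (phibar n) (psin n) (comp1 n) (comp2 n)

lemma eIso_mk (n : ℕ) (f : MvPolynomial (Fin (n + 1) × Fin (n + 1)) ℂ) :
    eIso n (Ideal.Quotient.mk (In n) f) = phin n f := rfl

/-! ### Compatibility of the brackets -/

@[simp] lemma fin_zero_eq_succ {n : ℕ} (k : Fin n) :
    ((0 : Fin (n + 1)) = k.succ) ↔ False := by
  simp [eq_comm, Fin.succ_ne_zero]

/-- The bracket compatibility on generators. -/
lemma key_gen (n : ℕ) (p q : Fin (n + 1) × Fin (n + 1)) :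
    phin n (Pn (n + 1) p q) = pbP n (gmap n p) (gmap n q) := by
  obtain ⟨p1, p2⟩ := p
  obtain ⟨q1, q2⟩ := q
  rcases Fin.eq_zero_or_eq_succ p1 with rfl | ⟨i, rfl⟩ <;>
    rcases Fin.eq_zero_or_eq_succ p2 with rfl | ⟨j, rfl⟩ <;>
    rcases Fin.eq_zero_or_eq_succ q1 with rfl | ⟨k, rfl⟩ <;>
    rcases Fin.eq_zero_or_eq_succ q2 with rfl | ⟨l, rfl⟩ <;>
    simp only [gmap_00, gmap_zero, gmap_0succ, gmap_succ0, gmap_succsucc,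
      pbP_zero_left, pbP_zero_right, pbP_X_X, pbP_X_C, pbP_C_X, pbP_C_C, pbn_X_X] <;>
    simp only [Pn, Fin.succ_lt_succ_iff, Fin.succ_inj] <;>
    split_ifs <;>
    simp_all [Fin.succ_ne_zero, map_ofNat]

@[simp] lemma phin_C (n : ℕ) (a : ℂ) :
    phin n (C a) = Polynomial.C (C a) := by
  simp [phin, algHom_C]

/-- Bracket compatibility with a generator in the first slot. -/
lemma key_X (n : ℕ) (p : Fin (n + 1) × Fin (n + 1))
    (g : MvPolynomial (Fin (n + 1) × Fin (n + 1)) ℂ) :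
    phin n (pbn (n + 1) (X p) g) = pbP n (gmap n p) (phin n g) := by
  induction g using MvPolynomial.induction_on with
  | C a => rw [pbn_C_right, map_zero, phin_C, pbP_C_right]
  | add f g hf hg => rw [pbn_add_right, map_add, hf, hg, map_add, pbP_add_right]
  | mul_X g q hg =>
    rw [pbn_mul_right, map_add, map_mul, map_mul, pbn_X_X, key_gen, hg, phin_X,
      map_mul, phin_X, pbP_mul_right]

/-- Bracket compatibility: `phin` intertwines `pbn` with `pbP`. -/
lemma key (n : ℕ) (f g : MvPolynomial (Fin (n + 1) × Fin (n + 1)) ℂ) :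
    phin n (pbn (n + 1) f g) = pbP n (phin n f) (phin n g) := by
  induction f using MvPolynomial.induction_on with
  | C a => rw [pbn_C_left, map_zero, phin_C, pbP_C_left]
  | add f f' hf hf' => rw [pbn_add_left, map_add, hf, hf', map_add, pbP_add_left]
  | mul_X f p hf =>
    rw [pbn_mul_left, map_add, map_mul, map_mul, key_X, hf, phin_X, map_mul, phin_X,
      pbP_mul_left]

/-- `O(M_{n+1})/I ≅ O(M_n)[t]` as Poisson algebras, the
isomorphism sending `x_{11}+I ↦ t` and `x_{ij}+I ↦ x_{i−1,j−1}` for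
`2 ≤ i,j`; it intertwines the bracket induced on the quotient with the
trivial central extension of the bracket of `O(M_n)`. -/
theorem stmt12 (n : ℕ) :
    ∃ e : (MvPolynomial (Fin (n + 1) × Fin (n + 1)) ℂ ⧸ In n) ≃ₐ[ℂ]
        Polynomial (MvPolynomial (Fin n × Fin n) ℂ),
      e (Ideal.Quotient.mk (In n) (X (0, 0))) = Polynomial.X ∧
      (∀ i j : Fin n,
        e (Ideal.Quotient.mk (In n) (X (i.succ, j.succ))) = Polynomial.C (X (i, j))) ∧
      (∀ f g : MvPolynomial (Fin (n + 1) × Fin (n + 1)) ℂ,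
        e (Ideal.Quotient.mk (In n) (pbn (n + 1) f g)) =
          pbP n (e (Ideal.Quotient.mk (In n) f)) (e (Ideal.Quotient.mk (In n) g))) := by
  refine ⟨eIso n, ?_, ?_, ?_⟩
  · rw [eIso_mk, phin_X, gmap_00]
  · intro i j
    rw [eIso_mk, phin_X, gmap_succsucc]
  · intro f g
    rw [eIso_mk, eIso_mk, eIso_mk, key]

end
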